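/- For every β ∈ (0,1) there exists R₀ > 0 such that for all λ > 0 and all Γ_C, Γ_N > 0 with Γ_N/Γ_C ≥ R₀ the following holds. Define F(c₂) = 4Γ_N² β^{2λc₂−1}/λ² + 4Γ_C² (1 − β^{2λc₂−1}) c₂²/(2λc₂ − 1) for c₂ with 2λc₂ ≥ 2. Then every minimizer c₂* of F over {c₂ : 2λc₂ ≥ 2} satisfies 2λc₂* ∈ [ 1 + (2·log(Γ_N/Γ_C) + log log(1/β)) / log(1/β) , 1 + (2·log(4Γ_N/Γ_C) + log log(1/β)) / log(1/β) ]. -/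

import Mathlib

open Real Set

set_option maxHeartbeats 1000000


/-- Location of the optimal second learning rate for the noisy-first order
(Lemma on large noise ratio): for a sufficiently large ratio `Γ_N/Γ_C`, every
minimizer `c₂*` of
`F(c₂) = 4Γ_N²β^{2λc₂−1}/λ² + 4Γ_C²(1−β^{2λc₂−1})c₂²/(2λc₂−1)`
over `{c₂ : 2λc₂ ≥ 2}` satisfies
`2λc₂* ∈ [1 + (2 log(Γ_N/Γ_C) + log log(1/β))/log(1/β),
          1 + (2 log(4Γ_N/Γ_C) + log log(1/β))/log(1/β)]`. -/
theorem statement_15 (β : ℝ) (hβ : β ∈ Set.Ioo (0 : ℝ) 1) :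
    ∃ R0 : ℝ, 0 < R0 ∧
      ∀ lam ΓC ΓN : ℝ, 0 < lam → 0 < ΓC → 0 < ΓN → R0 ≤ ΓN / ΓC →
        ∀ c2 : ℝ, 2 ≤ 2 * lam * c2 →
          (∀ c : ℝ, 2 ≤ 2 * lam * c →
            4 * ΓN ^ 2 * β ^ (2 * lam * c2 - 1) / lam ^ 2 +
                4 * ΓC ^ 2 * (1 - β ^ (2 * lam * c2 - 1)) * c2 ^ 2 / (2 * lam * c2 - 1) ≤
              4 * ΓN ^ 2 * β ^ (2 * lam * c - 1) / lam ^ 2 +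
                4 * ΓC ^ 2 * (1 - β ^ (2 * lam * c - 1)) * c ^ 2 / (2 * lam * c - 1)) →
          (1 + (2 * Real.log (ΓN / ΓC) + Real.log (Real.log (1 / β))) / Real.log (1 / β)
              ≤ 2 * lam * c2 ∧
           2 * lam * c2 ≤
            1 + (2 * Real.log (4 * ΓN / ΓC) + Real.log (Real.log (1 / β))) / Real.log (1 / β)) := by
  obtain ⟨hβ0, hβ1⟩ := hβ
  set L := Real.log (1 / β) with hLdef
  have hL : 0 < L := Real.log_pos (by rw [lt_div_iff₀ hβ0]; linarith)
  have hlogβ : Real.log β = -L := by rw [hLdef, one_div, Real.log_inv]; ring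
  -- helper: t * exp (-t) ≤ 1 / exp 1 for t > 0
  have hte : ∀ t : ℝ, 0 < t → t * Real.exp (-t) ≤ 1 / Real.exp 1 := by
    intro t ht
    have h1 : t ≤ Real.exp (t - 1) := by linarith [Real.add_one_le_exp (t - 1)]
    rw [Real.exp_sub] at h1
    rw [Real.exp_neg, ← div_eq_mul_inv, div_le_div_iff₀ (Real.exp_pos t) (Real.exp_pos 1)]
    rw [le_div_iff₀ (Real.exp_pos 1)] at h1
    linarith
  have hexp1 : (4 : ℝ) / Real.exp 1 < 3 := by
    have := Real.exp_one_gt_d9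
    rw [div_lt_iff₀ (Real.exp_pos 1)]
    nlinarith
  refine ⟨1 + Real.sqrt (1 / (2 * L)) + Real.exp ((3 * L - Real.log L) / 2), by positivity, ?_⟩
  intro lam ΓC ΓN hlam hΓC hΓN hR0 c2 hc2 hmin
  set R : ℝ := ΓN / ΓC with hRdef
  have hRpos : 0 < R := div_pos hΓN hΓC
  have hlam' : lam ≠ 0 := ne_of_gt hlam
  have hΓNR : ΓN = R * ΓC := by rw [hRdef, div_mul_cancel₀ _ (ne_of_gt hΓC)]
  have hR1 : (1 : ℝ) ≤ R := by
    have := Real.sqrt_nonneg (1 / (2 * L))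
    have := Real.exp_pos ((3 * L - Real.log L) / 2)
    linarith
  have hRsq : 1 / (2 * L) ≤ R ^ 2 := by
    have hs : Real.sqrt (1 / (2 * L)) ≤ R := by
      have := Real.exp_pos ((3 * L - Real.log L) / 2); linarith
    calc 1 / (2 * L) = Real.sqrt (1 / (2 * L)) ^ 2 := (Real.sq_sqrt (by positivity)).symm
      _ ≤ R ^ 2 := by nlinarith [Real.sqrt_nonneg (1 / (2 * L))]
  have h16 : 8 ≤ 16 * R ^ 2 * L := by
    have := mul_le_mul_of_nonneg_right hRsq (le_of_lt hL)
    rw [div_mul_eq_mul_div, one_mul, div_le_iff₀ (by positivity : (0:ℝ) < 2 * L)] at this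
    nlinarith
  rw [show 4 * ΓN / ΓC = 4 * R from by rw [hRdef]; ring]
  set a : ℝ := (2 * Real.log R + Real.log L) / L with hadef
  set b : ℝ := (2 * Real.log (4 * R) + Real.log L) / L with hbdef
  have hb3 : 3 ≤ b := by
    have h4R : Real.exp ((3 * L - Real.log L) / 2) ≤ 4 * R := by
      have := Real.sqrt_nonneg (1 / (2 * L)); nlinarith
    have hlog : (3 * L - Real.log L) / 2 ≤ Real.log (4 * R) :=
      (Real.le_log_iff_exp_le (by positivity)).mpr h4R
    rw [hbdef, le_div_iff₀ hL]; linarith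
  set x2 : ℝ := 2 * lam * c2 - 1 with hx2def
  have hx2 : 1 ≤ x2 := by rw [hx2def]; linarith
  -- the reduced objective, in terms of x = 2λc - 1
  set E : ℝ → ℝ := fun x => Real.exp (-(L * x)) with hEdef
  set H : ℝ → ℝ := fun x => 4 * ΓN ^ 2 * E x + ΓC ^ 2 * ((1 - E x) * (x + 1) ^ 2) / x
    with hHdef
  set H' : ℝ → ℝ := fun x =>
      -(4 * ΓN ^ 2 * L) * E x +
        ΓC ^ 2 * (L * E x * (x + 1) ^ 2 / x + (1 - E x) * (1 - 1 / x ^ 2)) with hH'def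
  -- exponential identities
  have hEa : E a = 1 / (R ^ 2 * L) := by
    simp only [hEdef]
    have hLa : L * a = Real.log (R ^ 2) + Real.log L := by
      rw [Real.log_pow]; push_cast; rw [hadef]; field_simp
    rw [hLa, ← Real.log_mul (by positivity) (ne_of_gt hL), Real.exp_neg,
      Real.exp_log (by positivity), one_div]
  have hEb : E b = 1 / (16 * R ^ 2 * L) := by
    simp only [hEdef]
    have hLb : L * b = Real.log ((4 * R) ^ 2) + Real.log L := by
      rw [Real.log_pow]; push_cast; rw [hbdef]; field_simp
    rw [hLb, ← Real.log_mul (by positivity) (ne_of_gt hL), Real.exp_neg,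
      Real.exp_log (by positivity), one_div]
    ring_nf
  have hH : ∀ x : ℝ, 0 < x → HasDerivAt H (H' x) x := by
    intro x hx
    simp only [hHdef, hH'def, hEdef]
    have hE : HasDerivAt (fun y : ℝ => Real.exp (-(L * y))) (-L * Real.exp (-(L * x))) x := by
      have h1 : HasDerivAt (fun y : ℝ => -(L * y)) (-L) x := by
        simpa using ((hasDerivAt_id x).const_mul (-L))
      simpa [mul_comm] using h1.exp
    have hpow : HasDerivAt (fun y : ℝ => (y + 1) ^ 2) (2 * (x + 1)) x := by
      have := ((hasDerivAt_id x).add_const 1).pow 2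
      simpa using! this
    have hnum : HasDerivAt (fun y => ΓC ^ 2 * ((1 - Real.exp (-(L * y))) * (y + 1) ^ 2))
        (ΓC ^ 2 * (-(-L * Real.exp (-(L * x))) * (x + 1) ^ 2 +
          (1 - Real.exp (-(L * x))) * (2 * (x + 1)))) x := by
      have h1 : HasDerivAt (fun y : ℝ => 1 - Real.exp (-(L * y)))
          (-(-L * Real.exp (-(L * x)))) x := by
        simpa using! (hasDerivAt_const x (1 : ℝ)).sub hE
      exact (h1.mul hpow).const_mul _
    have hdiv := hnum.div (hasDerivAt_id x) (ne_of_gt hx)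
    have hfull := (hE.const_mul (4 * ΓN ^ 2)).add hdiv
    have heq : -(4 * ΓN ^ 2 * L) * Real.exp (-(L * x)) +
        ΓC ^ 2 * (L * Real.exp (-(L * x)) * (x + 1) ^ 2 / x +
          (1 - Real.exp (-(L * x))) * (1 - 1 / x ^ 2)) =
        4 * ΓN ^ 2 * (-L * Real.exp (-(L * x))) +
          (ΓC ^ 2 * (-(-L * Real.exp (-(L * x))) * (x + 1) ^ 2 +
              (1 - Real.exp (-(L * x))) * (2 * (x + 1))) * x -
            ΓC ^ 2 * ((1 - Real.exp (-(L * x))) * (x + 1) ^ 2) * 1) / x ^ 2 := by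
      field_simp
      ring
    rw [heq]
    exact hfull
  -- transfer minimality to H
  have hrpow : ∀ t : ℝ, β ^ t = E t := by
    intro t
    rw [Real.rpow_def_of_pos hβ0, hlogβ, hEdef]
    ring_nf
  have hmin' : ∀ x : ℝ, 1 ≤ x → H x2 ≤ H x := by
    intro x hx
    have hx0 : (0:ℝ) < x := by linarith
    have hx20 : (0:ℝ) < x2 := by linarith
    have hxne : x ≠ 0 := ne_of_gt hx0
    have hx2ne : x2 ≠ 0 := ne_of_gt hx20
    set c : ℝ := (x + 1) / (2 * lam) with hcdef
    have hcc : 2 * lam * c = x + 1 := by rw [hcdef]; field_simp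
    have h2c : 2 ≤ 2 * lam * c := by rw [hcc]; linarith
    have hkey := hmin c h2c
    rw [hrpow, hrpow] at hkey
    have hxc : 2 * lam * c - 1 = x := by rw [hcc]; ring
    rw [hxc] at hkey
    have hsq2 : (x2 + 1) ^ 2 = 4 * lam ^ 2 * c2 ^ 2 := by rw [hx2def]; ring
    have hsqc : (x + 1) ^ 2 = 4 * lam ^ 2 * c ^ 2 := by rw [← hcc]; ring
    have hL2 : H x2 = (4 * ΓN ^ 2 * E x2 / lam ^ 2 +
        4 * ΓC ^ 2 * (1 - E x2) * c2 ^ 2 / x2) * lam ^ 2 := by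
      simp only [hHdef]
      rw [hsq2]; field_simp
    have hL3 : H x = (4 * ΓN ^ 2 * E x / lam ^ 2 +
        4 * ΓC ^ 2 * (1 - E x) * c ^ 2 / x) * lam ^ 2 := by
      simp only [hHdef]
      rw [hsqc]; field_simp
    rw [hL2, hL3]
    exact mul_le_mul_of_nonneg_right hkey (by positivity)
  -- derivative is negative left of a
  have lem_neg : ∀ x : ℝ, 1 < x → x < a → H' x < 0 := by
    intro x hx1 hxa
    clear hmin hmin' hrpow hH hEb hb3 hc2
    have hx0 : (0:ℝ) < x := by linarith
    have hepos : (0:ℝ) < E x := by simp only [hEdef]; positivity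
    have he1 : E x ≤ 1 := by
      simp only [hEdef]
      exact Real.exp_le_one_iff.mpr (by linarith [mul_pos hL hx0])
    have hEax : E a ≤ E x := by
      simp only [hEdef]
      exact Real.exp_le_exp.mpr
        (by linarith [mul_le_mul_of_nonneg_left (le_of_lt hxa) (le_of_lt hL)])
    have hC2 : (0:ℝ) < ΓC ^ 2 := by positivity
    have hT1 : -(4 * ΓN ^ 2 * L) * E x ≤ -(4 * ΓC ^ 2) := by
      have h1 : 1 / (R ^ 2 * L) ≤ E x := hEa ▸ hEax
      have h2 : ΓN ^ 2 = R ^ 2 * ΓC ^ 2 := by rw [hΓNR]; ring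
      have h3 : 4 * ΓN ^ 2 * L * (1 / (R ^ 2 * L)) = 4 * ΓC ^ 2 := by
        rw [h2]; field_simp
      nlinarith [mul_le_mul_of_nonneg_left h1 (show (0:ℝ) ≤ 4 * ΓN ^ 2 * L by positivity)]
    have hT2 : L * E x * (x + 1) ^ 2 / x ≤ 4 / Real.exp 1 := by
      have h1 : (x + 1) ^ 2 / x ≤ x + 3 := by rw [div_le_iff₀ hx0]; nlinarith
      have h2 : L * E x * ((x + 1) ^ 2 / x) ≤ L * E x * (x + 3) :=
        mul_le_mul_of_nonneg_left h1 (by positivity)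
      have h3 : L * x * E x ≤ 1 / Real.exp 1 := by
        have := hte (L * x) (by positivity)
        simp only [hEdef]
        calc L * x * Real.exp (-(L * x)) = (L * x) * Real.exp (-(L * x)) := by ring
          _ ≤ 1 / Real.exp 1 := this
      have h6 : L * E x ≤ 1 / Real.exp 1 := by
        have h4 : E x ≤ Real.exp (-L) := by
          simp only [hEdef]
          exact Real.exp_le_exp.mpr
            (by linarith [mul_le_mul_of_nonneg_left (le_of_lt hx1) (le_of_lt hL)])
        have h5 := hte L hL
        nlinarith
      calc L * E x * (x + 1) ^ 2 / x = L * E x * ((x + 1) ^ 2 / x) := by ring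
        _ ≤ L * E x * (x + 3) := h2
        _ = L * x * E x + 3 * (L * E x) := by ring
        _ ≤ 1 / Real.exp 1 + 3 * (1 / Real.exp 1) := by linarith
        _ = 4 / Real.exp 1 := by ring
    have hT3 : (1 - E x) * (1 - 1 / x ^ 2) ≤ 1 := by
      have h1 : (0:ℝ) ≤ 1 - E x := by linarith
      have h2 : (0:ℝ) < 1 / x ^ 2 := by positivity
      nlinarith
    simp only [hH'def]
    have hmid : ΓC ^ 2 * (L * E x * (x + 1) ^ 2 / x + (1 - E x) * (1 - 1 / x ^ 2)) ≤
        ΓC ^ 2 * (4 / Real.exp 1 + 1) :=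
      mul_le_mul_of_nonneg_left (by linarith) (le_of_lt hC2)
    nlinarith
  -- derivative is positive right of b
  have lem_pos : ∀ x : ℝ, b < x → 0 < H' x := by
    intro x hbx
    clear hmin hmin' hrpow hH hEa lem_neg hc2
    have hx3 : (3:ℝ) < x := lt_of_le_of_lt hb3 hbx
    have hx0 : (0:ℝ) < x := by linarith
    have hepos : (0:ℝ) < E x := by simp only [hEdef]; positivity
    have hC2 : (0:ℝ) < ΓC ^ 2 := by positivity
    have hEbx : E x ≤ E b := by
      simp only [hEdef]
      exact Real.exp_le_exp.mpr
        (by linarith [mul_le_mul_of_nonneg_left (le_of_lt hbx) (le_of_lt hL)])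
    have he8 : E x ≤ 1 / 8 := by
      refine le_trans hEbx ?_
      rw [hEb]
      rw [div_le_div_iff₀ (by nlinarith) (by norm_num)]
      linarith
    have hT1 : -(ΓC ^ 2 / 4) ≤ -(4 * ΓN ^ 2 * L) * E x := by
      have h2 : ΓN ^ 2 = R ^ 2 * ΓC ^ 2 := by rw [hΓNR]; ring
      have h3 : 4 * ΓN ^ 2 * L * (1 / (16 * R ^ 2 * L)) = ΓC ^ 2 / 4 := by
        rw [h2]; field_simp; ring
      have h4 : 4 * ΓN ^ 2 * L * E x ≤ 4 * ΓN ^ 2 * L * (1 / (16 * R ^ 2 * L)) := by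
        apply mul_le_mul_of_nonneg_left _ (show (0:ℝ) ≤ 4 * ΓN ^ 2 * L by positivity)
        rw [← hEb]; exact hEbx
      nlinarith
    have hT2 : (0:ℝ) ≤ L * E x * (x + 1) ^ 2 / x := by positivity
    have hT3 : (7:ℝ)/9 ≤ (1 - E x) * (1 - 1 / x ^ 2) := by
      have h1 : 1 / x ^ 2 ≤ 1 / 9 := by
        rw [div_le_div_iff₀ (by positivity) (by norm_num)]; nlinarith
      have h2 : (7:ℝ)/8 ≤ 1 - E x := by linarith
      nlinarith
    simp only [hH'def]
    have hmid : ΓC ^ 2 * (7/9) ≤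
        ΓC ^ 2 * (L * E x * (x + 1) ^ 2 / x + (1 - E x) * (1 - 1 / x ^ 2)) :=
      mul_le_mul_of_nonneg_left (by linarith) (le_of_lt hC2)
    nlinarith
  -- lower bound
  have hlower : a ≤ x2 := by
    by_contra hcon
    push_neg at hcon
    have h1a : 1 < a := lt_of_le_of_lt hx2 hcon
    have hanti : StrictAntiOn H (Set.Icc 1 a) := by
      apply strictAntiOn_of_deriv_neg (convex_Icc 1 a)
      · intro y hy
        exact (hH y (by linarith [hy.1])).continuousAt.continuousWithinAt
      · intro y hy
        rw [interior_Icc] at hy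
        rw [(hH y (by linarith [hy.1])).deriv]
        exact lem_neg y hy.1 hy.2
    have hlt : H a < H x2 :=
      hanti ⟨hx2, le_of_lt hcon⟩ ⟨le_of_lt h1a, le_refl a⟩ hcon
    exact absurd (hmin' a (le_of_lt h1a)) (not_le.mpr hlt)
  -- upper bound
  have hupper : x2 ≤ b := by
    by_contra hcon
    push_neg at hcon
    have hmono : StrictMonoOn H (Set.Ici b) := by
      apply strictMonoOn_of_deriv_pos (convex_Ici b)
      · intro y hy
        have hy0 : (0:ℝ) < y := by
          have : b ≤ y := hy
          linarith
        exact (hH y hy0).continuousAt.continuousWithinAt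
      · intro y hy
        rw [interior_Ici] at hy
        rw [(hH y (by linarith [Set.mem_Ioi.mp hy])).deriv]
        exact lem_pos y hy
    have hlt : H b < H x2 :=
      hmono Set.self_mem_Ici (Set.mem_Ici.mpr (le_of_lt hcon)) hcon
    exact absurd (hmin' b (by linarith)) (not_le.mpr hlt)
  exact ⟨by linarith, by linarith⟩
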